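/- arXiv:2002.09046 — 4 statements merged into one kernel-verified Lean document; each statement's English description precedes it below -/
import Mathlib

section
/- Let p be a probability density on ℝⁿ, let L : ℝⁿ → ℝ be measurable with 0 ≤ L(x) ≤ 1 for all x, and suppose π := ∫ L(x) p(x) dx ∈ (0,1). Define q₁(x) := L(x) p(x) / π, q₀(x) := (1−L(x)) p(x) / (1−π), m(x) := (q₀(x)+q₁(x))/2, f₁(x) := L(x)/π, and f₀(x) := (1−L(x))/(1−π). Then the Jensen–Shannon divergence satisfies JS(q₀ ‖ q₁) = ½ ∫ [ f₁(x) · log( f₁(x) / (f₁(x)+f₀(x)) ) + f₀(x) · log( f₀(x) / (f₁(x)+f₀(x)) ) ] p(x) dx + log 2, where JS(q₀ ‖ q₁) := ½ ∫ q₁(x) log(q₁(x)/m(x)) dx + ½ ∫ q₀(x) log(q₀(x)/m(x)) dx, all integrals are Lebesgue integrals (which here are well defined in the extended reals), and the convention 0 · log 0 = 0 is used. -/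
open MeasureTheory

/-- Pointwise bound: `|a log(a/(a+b))| ≤ b` for `a, b ≥ 0`. -/
lemma nb_aux_bound (a b : ℝ) (ha : 0 ≤ a) (hb : 0 ≤ b) :
    |a * Real.log (a / (a + b))| ≤ b := by
  rcases eq_or_lt_of_le ha with h | h
  · simpa [← h] using hb
  · have hab : 0 < a + b := by linarith
    have h2 : 0 < a / (a + b) := div_pos h hab
    have h1 : a / (a + b) ≤ 1 := by rw [div_le_one hab]; linarith
    have hlogle : Real.log (a / (a + b)) ≤ 0 := Real.log_nonpos h2.le h1
    have hkey : Real.log ((a + b) / a) ≤ (a + b) / a - 1 :=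
      Real.log_le_sub_one_of_pos (div_pos hab h)
    have heq : Real.log (a / (a + b)) = -Real.log ((a + b) / a) := by
      rw [Real.log_div h.ne' hab.ne', Real.log_div hab.ne' h.ne']; ring
    have hba : a * ((a + b) / a - 1) = b := by field_simp; ring
    rw [abs_le]
    constructor
    · rw [heq]
      nlinarith [mul_le_mul_of_nonneg_left hkey ha]
    · nlinarith [mul_le_mul_of_nonneg_left hlogle ha]

/-- Pointwise identity. -/
lemma nb_aux_id (a b P : ℝ) (ha : 0 ≤ a) (hb : 0 ≤ b) (hP : 0 ≤ P) :
    a * P * Real.log (a * P / ((b * P + a * P) / 2)) =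
      a * Real.log (a / (a + b)) * P + Real.log 2 * (a * P) := by
  rcases eq_or_lt_of_le hP with hP0 | hP0
  · simp [← hP0]
  rcases eq_or_lt_of_le ha with ha0 | ha0
  · simp [← ha0]
  · have hab : 0 < a + b := by linarith
    have h1 : a * P / ((b * P + a * P) / 2) = 2 * (a / (a + b)) := by
      field_simp; ring
    rw [h1, Real.log_mul (by norm_num) (ne_of_gt (div_pos ha0 hab))]
    ring

/-- **Key identity of Proposition 2 (Neural Bayes-DML).**
Via the binary Neural Bayes parameterization `q₁ = Lp/π`, `q₀ = (1−L)p/(1−π)` with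
`π = ∫ L p ∈ (0,1)`, the Jensen–Shannon divergence
`JS(q₀ ‖ q₁) = ½ ∫ q₁ log(q₁/m) + ½ ∫ q₀ log(q₀/m)` with `m = (q₀+q₁)/2` equals
`½ ∫ [f₁ log(f₁/(f₁+f₀)) + f₀ log(f₀/(f₁+f₀))] p + log 2`, where `f₁ = L/π` and
`f₀ = (1−L)/(1−π)` (natural logs, convention `0 · log 0 = 0`). -/
theorem neural_bayes_DML_JS_identity {n : ℕ}
    (p : (Fin n → ℝ) → ℝ) (hp_meas : Measurable p)
    (hp_nonneg : ∀ x, 0 ≤ p x) (hp_int : ∫ x, p x = 1)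
    (L : (Fin n → ℝ) → ℝ) (hL_meas : Measurable L)
    (hL01 : ∀ x, L x ∈ Set.Icc (0 : ℝ) 1)
    (π : ℝ) (hπ_def : π = ∫ x, L x * p x) (hπ_mem : π ∈ Set.Ioo (0 : ℝ) 1)
    (q₁ q₀ m f₁ f₀ : (Fin n → ℝ) → ℝ)
    (hq₁ : ∀ x, q₁ x = L x * p x / π)
    (hq₀ : ∀ x, q₀ x = (1 - L x) * p x / (1 - π))
    (hm : ∀ x, m x = (q₀ x + q₁ x) / 2)
    (hf₁ : ∀ x, f₁ x = L x / π)
    (hf₀ : ∀ x, f₀ x = (1 - L x) / (1 - π)) :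
    (1 / 2) * (∫ x, q₁ x * Real.log (q₁ x / m x)) +
      (1 / 2) * (∫ x, q₀ x * Real.log (q₀ x / m x)) =
    (1 / 2) * (∫ x, (f₁ x * Real.log (f₁ x / (f₁ x + f₀ x)) +
        f₀ x * Real.log (f₀ x / (f₁ x + f₀ x))) * p x) + Real.log 2 := by
  obtain ⟨hπ0, hπ1⟩ := hπ_mem
  have hπ1' : 0 < 1 - π := by linarith
  have hf₁_nonneg : ∀ x, 0 ≤ f₁ x := fun x => by
    rw [hf₁]; exact div_nonneg (hL01 x).1 hπ0.le
  have hf₀_nonneg : ∀ x, 0 ≤ f₀ x := fun x => by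
    rw [hf₀]; exact div_nonneg (by linarith [(hL01 x).2]) hπ1'.le
  have hf₁m : Measurable f₁ := by
    have : f₁ = fun x => L x / π := funext hf₁
    rw [this]; exact hL_meas.div_const π
  have hf₀m : Measurable f₀ := by
    have : f₀ = fun x => (1 - L x) / (1 - π) := funext hf₀
    rw [this]; exact (measurable_const.sub hL_meas).div_const _
  have hp_integrable : Integrable p := by
    by_contra h
    rw [integral_undef h] at hp_int; norm_num at hp_int
  have hLp_int : Integrable (fun x => L x * p x) := by
    refine Integrable.bdd_mul hp_integrable hL_meas.aestronglyMeasurable (c := 1) (Filter.Eventually.of_forall fun x => ?_)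
    rw [Real.norm_eq_abs, abs_le]
    exact ⟨by linarith [(hL01 x).1], (hL01 x).2⟩
  -- integrability of f₁ * p and f₀ * p, and their integrals equal 1
  have hf₁p_int : Integrable (fun x => f₁ x * p x) := by
    refine Integrable.bdd_mul hp_integrable hf₁m.aestronglyMeasurable (c := 1 / π) (Filter.Eventually.of_forall fun x => ?_)
    rw [Real.norm_eq_abs, abs_of_nonneg (hf₁_nonneg x), hf₁]
    gcongr
    exact (hL01 x).2
  have hf₀p_int : Integrable (fun x => f₀ x * p x) := by
    refine Integrable.bdd_mul hp_integrable hf₀m.aestronglyMeasurable (c := 1 / (1 - π)) (Filter.Eventually.of_forall fun x => ?_)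
    rw [Real.norm_eq_abs, abs_of_nonneg (hf₀_nonneg x), hf₀]
    gcongr
    linarith [(hL01 x).1]
  have hint_f₁p : ∫ x, f₁ x * p x = 1 := by
    have : (fun x => f₁ x * p x) = fun x => (L x * p x) / π := by
      funext x; rw [hf₁]; ring
    rw [this, integral_div, ← hπ_def, div_self hπ0.ne']
  have hint_f₀p : ∫ x, f₀ x * p x = 1 := by
    have : (fun x => f₀ x * p x) = fun x => (p x - L x * p x) / (1 - π) := by
      funext x; rw [hf₀]; ring
    rw [this, integral_div, integral_sub hp_integrable hLp_int, hp_int, ← hπ_def,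
      div_self hπ1'.ne']
  -- set g₁, g₀
  set g₁ : (Fin n → ℝ) → ℝ := fun x => f₁ x * Real.log (f₁ x / (f₁ x + f₀ x)) with hg₁
  set g₀ : (Fin n → ℝ) → ℝ := fun x => f₀ x * Real.log (f₀ x / (f₀ x + f₁ x)) with hg₀
  have hg₁m : Measurable g₁ :=
    hf₁m.mul (Real.measurable_log.comp (hf₁m.div (hf₁m.add hf₀m)))
  have hg₀m : Measurable g₀ :=
    hf₀m.mul (Real.measurable_log.comp (hf₀m.div (hf₀m.add hf₁m)))
  have hg₁p_int : Integrable (fun x => g₁ x * p x) := by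
    refine Integrable.bdd_mul hp_integrable hg₁m.aestronglyMeasurable (c := 1 / (1 - π)) (Filter.Eventually.of_forall fun x => ?_)
    refine (nb_aux_bound (f₁ x) (f₀ x) (hf₁_nonneg x) (hf₀_nonneg x)).trans ?_
    rw [hf₀]; gcongr; linarith [(hL01 x).1]
  have hg₀p_int : Integrable (fun x => g₀ x * p x) := by
    refine Integrable.bdd_mul hp_integrable hg₀m.aestronglyMeasurable (c := 1 / π) (Filter.Eventually.of_forall fun x => ?_)
    refine (nb_aux_bound (f₀ x) (f₁ x) (hf₀_nonneg x) (hf₁_nonneg x)).trans ?_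
    rw [hf₁]; gcongr; exact (hL01 x).2
  -- pointwise identities
  have key1 : ∀ x, q₁ x * Real.log (q₁ x / m x) =
      g₁ x * p x + Real.log 2 * (f₁ x * p x) := by
    intro x
    have e1 : q₁ x = f₁ x * p x := by rw [hq₁, hf₁]; ring
    have e0 : q₀ x = f₀ x * p x := by rw [hq₀, hf₀]; ring
    rw [e1, hm, e0, e1, hg₁]
    exact nb_aux_id (f₁ x) (f₀ x) (p x) (hf₁_nonneg x) (hf₀_nonneg x) (hp_nonneg x)
  have key0 : ∀ x, q₀ x * Real.log (q₀ x / m x) =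
      g₀ x * p x + Real.log 2 * (f₀ x * p x) := by
    intro x
    have e1 : q₁ x = f₁ x * p x := by rw [hq₁, hf₁]; ring
    have e0 : q₀ x = f₀ x * p x := by rw [hq₀, hf₀]; ring
    have hmx : m x = (f₁ x * p x + f₀ x * p x) / 2 := by rw [hm, e0, e1]; ring
    rw [e0, hmx, hg₀]
    exact nb_aux_id (f₀ x) (f₁ x) (p x) (hf₀_nonneg x) (hf₁_nonneg x) (hp_nonneg x)
  have hI1 : ∫ x, q₁ x * Real.log (q₁ x / m x) = (∫ x, g₁ x * p x) + Real.log 2 := by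
    rw [show (fun x => q₁ x * Real.log (q₁ x / m x)) =
        fun x => g₁ x * p x + Real.log 2 * (f₁ x * p x) from funext key1,
      integral_add hg₁p_int (hf₁p_int.const_mul _), integral_const_mul, hint_f₁p, mul_one]
  have hI0 : ∫ x, q₀ x * Real.log (q₀ x / m x) = (∫ x, g₀ x * p x) + Real.log 2 := by
    rw [show (fun x => q₀ x * Real.log (q₀ x / m x)) =
        fun x => g₀ x * p x + Real.log 2 * (f₀ x * p x) from funext key0,
      integral_add hg₀p_int (hf₀p_int.const_mul _), integral_const_mul, hint_f₀p, mul_one]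
  have hRHS : ∫ x, (f₁ x * Real.log (f₁ x / (f₁ x + f₀ x)) +
      f₀ x * Real.log (f₀ x / (f₁ x + f₀ x))) * p x =
      (∫ x, g₁ x * p x) + ∫ x, g₀ x * p x := by
    rw [show (fun x => (f₁ x * Real.log (f₁ x / (f₁ x + f₀ x)) +
        f₀ x * Real.log (f₀ x / (f₁ x + f₀ x))) * p x) =
        fun x => g₁ x * p x + g₀ x * p x from funext fun x => by
          simp only [hg₁, hg₀]; rw [add_comm (f₀ x) (f₁ x)]; ring,
      integral_add hg₁p_int hg₀p_int]
  rw [hI1, hI0, hRHS]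
  ring
end

section
/- Let p be a probability density on ℝⁿ whose positivity set {x : p(x) > 0} equals S₁ ∪ S₂, where S₁ and S₂ are nonempty, disjoint, open, path-connected subsets of ℝⁿ. Let L : ℝⁿ → ℝ be continuous with 0 ≤ L(x) ≤ 1 for all x and π := ∫ L(x) p(x) dx ∈ (0,1), and suppose L maximizes the Neural Bayes-DML objective, i.e. Obj(L) := ½ ∫ [ f₁ log( f₁/(f₁+f₀) ) + f₀ log( f₀/(f₁+f₀) ) ] p dx + log 2 = log 2, where f₁(x) := L(x)/π and f₀(x) := (1−L(x))/(1−π). Then exactly one of the following holds: (L(x) = 0 for all x ∈ S₁ and L(x) = 1 for all x ∈ S₂), or (L(x) = 1 for all x ∈ S₁ and L(x) = 0 for all x ∈ S₂). -/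
open MeasureTheory

/-- Pointwise: the integrand is nonpositive. -/
lemma nb_aux_nonpos (a b : ℝ) (ha : 0 ≤ a) (hb : 0 ≤ b) (hab : 0 < a + b) :
    a * Real.log (a / (a + b)) + b * Real.log (b / (a + b)) ≤ 0 := by
  have h1 : Real.log (a / (a + b)) ≤ 0 :=
    Real.log_nonpos (div_nonneg ha hab.le) ((div_le_one hab).2 (by linarith))
  have h2 : Real.log (b / (a + b)) ≤ 0 :=
    Real.log_nonpos (div_nonneg hb hab.le) ((div_le_one hab).2 (by linarith))
  have := mul_nonpos_of_nonneg_of_nonpos ha h1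
  have := mul_nonpos_of_nonneg_of_nonpos hb h2
  linarith

/-- Pointwise bound: `-(a log(a/(a+b)))` is at most `b`. -/
lemma nb_aux_term_bound (a b : ℝ) (ha : 0 ≤ a) (hb : 0 ≤ b) (hab : 0 < a + b) :
    -(a * Real.log (a / (a + b))) ≤ b := by
  rcases eq_or_lt_of_le ha with h | h
  · simp [← h, hb]
  · have hfrac : 0 < (a + b) / a := div_pos hab h
    have hlog : -(Real.log (a / (a + b))) = Real.log ((a + b) / a) := by
      rw [← Real.log_inv]
      congr 1
      field_simp
    have hle : Real.log ((a + b) / a) ≤ (a + b) / a - 1 := Real.log_le_sub_one_of_pos hfrac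
    have heq : (a + b) / a - 1 = b / a := by field_simp; ring
    have : a * Real.log ((a + b) / a) ≤ a * (b / a) := by
      apply mul_le_mul_of_nonneg_left _ ha
      rw [← heq]; exact hle
    have ha' : a * (b / a) = b := by field_simp
    calc -(a * Real.log (a / (a + b))) = a * Real.log ((a + b) / a) := by
          rw [← hlog]; ring
      _ ≤ a * (b / a) := this
      _ = b := ha'

/-- Pointwise strictness: if both `a` and `b` are positive the integrand is negative. -/
lemma nb_aux_neg (a b : ℝ) (ha : 0 < a) (hb : 0 < b) :
    a * Real.log (a / (a + b)) + b * Real.log (b / (a + b)) < 0 := by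
  have hab : 0 < a + b := by linarith
  have h1 : Real.log (a / (a + b)) < 0 :=
    Real.log_neg (div_pos ha hab) ((div_lt_one hab).2 (by linarith))
  have h2 : Real.log (b / (a + b)) ≤ 0 :=
    Real.log_nonpos (div_nonneg hb.le hab.le) ((div_le_one hab).2 (by linarith))
  have := mul_neg_of_pos_of_neg ha h1
  have := mul_nonpos_of_nonneg_of_nonpos hb.le h2
  linarith

/-- A continuous function taking only values 0 and 1 on a preconnected set is constant. -/
lemma nb_const_of_two_values {α : Type*} [TopologicalSpace α] (S : Set α)
    (hS : IsPreconnected S) (L : α → ℝ) (hL : Continuous L)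
    (h01 : ∀ x ∈ S, L x = 0 ∨ L x = 1) :
    (∀ x ∈ S, L x = 0) ∨ (∀ x ∈ S, L x = 1) := by
  have hu : IsOpen (L ⁻¹' Set.Iio (1/2 : ℝ)) := (isOpen_Iio).preimage hL
  have hv : IsOpen (L ⁻¹' Set.Ioi (1/2 : ℝ)) := (isOpen_Ioi).preimage hL
  have hdisj : Disjoint (L ⁻¹' Set.Iio (1/2 : ℝ)) (L ⁻¹' Set.Ioi (1/2 : ℝ)) := by
    rw [Set.disjoint_left]
    intro x hx hx'
    simp only [Set.mem_preimage, Set.mem_Iio, Set.mem_Ioi] at hx hx'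
    linarith
  have hsub : S ⊆ L ⁻¹' Set.Iio (1/2 : ℝ) ∪ L ⁻¹' Set.Ioi (1/2 : ℝ) := by
    intro x hx
    rcases h01 x hx with h | h
    · left; simp only [Set.mem_preimage, Set.mem_Iio, h]; norm_num
    · right; simp only [Set.mem_preimage, Set.mem_Ioi, h]; norm_num
  rcases hS.subset_or_subset hu hv hdisj hsub with h | h
  · left
    intro x hx
    rcases h01 x hx with h0 | h1
    · exact h0
    · have := h hx
      simp only [Set.mem_preimage, Set.mem_Iio, h1] at this
      norm_num at this
  · right
    intro x hx
    rcases h01 x hx with h0 | h1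
    · have := h hx
      simp only [Set.mem_preimage, Set.mem_Ioi, h0] at this
      norm_num at this
    · exact h1

/-- **Converse direction of Theorem 2 (optimality of Neural Bayes-DML).**
If the positivity set of the density `p` is the union of two nonempty, disjoint, open,
path-connected sets `S₁, S₂`, and a continuous `L : ℝⁿ → [0,1]` with `π = ∫ L p ∈ (0,1)`
maximizes the Neural Bayes-DML objective (i.e. attains the value `log 2`), then exactly
one of the following holds: `L ≡ 0` on `S₁` and `L ≡ 1` on `S₂`, or `L ≡ 1` on `S₁` and
`L ≡ 0` on `S₂`. -/
theorem neural_bayes_DML_maximizer_labels_components {n : ℕ}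
    (p : (Fin n → ℝ) → ℝ) (hp_meas : Measurable p)
    (hp_nonneg : ∀ x, 0 ≤ p x) (hp_int : ∫ x, p x = 1)
    (S₁ S₂ : Set (Fin n → ℝ))
    (hS₁ne : S₁.Nonempty) (hS₂ne : S₂.Nonempty)
    (hdisj : Disjoint S₁ S₂)
    (hS₁open : IsOpen S₁) (hS₂open : IsOpen S₂)
    (hS₁conn : IsPathConnected S₁) (hS₂conn : IsPathConnected S₂)
    (hsupp : {x | 0 < p x} = S₁ ∪ S₂)
    (L : (Fin n → ℝ) → ℝ) (hL_cont : Continuous L)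
    (hL01 : ∀ x, L x ∈ Set.Icc (0 : ℝ) 1)
    (π : ℝ) (hπ_def : π = ∫ x, L x * p x) (hπ_mem : π ∈ Set.Ioo (0 : ℝ) 1)
    (f₁ f₀ : (Fin n → ℝ) → ℝ)
    (hf₁ : ∀ x, f₁ x = L x / π)
    (hf₀ : ∀ x, f₀ x = (1 - L x) / (1 - π))
    (hmax : (1 / 2) * (∫ x, (f₁ x * Real.log (f₁ x / (f₁ x + f₀ x)) +
        f₀ x * Real.log (f₀ x / (f₁ x + f₀ x))) * p x) + Real.log 2 = Real.log 2) :
    Xor' ((∀ x ∈ S₁, L x = 0) ∧ (∀ x ∈ S₂, L x = 1))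
         ((∀ x ∈ S₁, L x = 1) ∧ (∀ x ∈ S₂, L x = 0)) := by
  obtain ⟨hπ0, hπ1⟩ := hπ_mem
  have hπ1' : 0 < 1 - π := by linarith
  -- basic facts about f₁, f₀
  have hf₁nn : ∀ x, 0 ≤ f₁ x := fun x => by
    rw [hf₁ x]; exact div_nonneg (hL01 x).1 hπ0.le
  have hf₀nn : ∀ x, 0 ≤ f₀ x := fun x => by
    rw [hf₀ x]; exact div_nonneg (by linarith [(hL01 x).2]) hπ1'.le
  have hsum : ∀ x, 0 < f₁ x + f₀ x := by
    intro x
    rcases lt_or_eq_of_le (hL01 x).1 with h | h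
    · have : 0 < f₁ x := by rw [hf₁ x]; exact div_pos h hπ0
      linarith [hf₀nn x]
    · have : 0 < f₀ x := by
        rw [hf₀ x]; exact div_pos (by rw [← h]; norm_num) hπ1'
      linarith [hf₁nn x]
  set G : (Fin n → ℝ) → ℝ := fun x =>
    (f₁ x * Real.log (f₁ x / (f₁ x + f₀ x)) +
      f₀ x * Real.log (f₀ x / (f₁ x + f₀ x))) * p x with hG
  have hGnonpos : ∀ x, G x ≤ 0 := fun x =>
    mul_nonpos_of_nonpos_of_nonneg
      (nb_aux_nonpos _ _ (hf₁nn x) (hf₀nn x) (hsum x)) (hp_nonneg x)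
  -- integrability of p
  have hp_intble : Integrable p := by
    by_contra h
    rw [integral_undef h] at hp_int
    norm_num at hp_int
  -- measurability
  have hL_meas : Measurable L := hL_cont.measurable
  have hf₁_eq : f₁ = fun x => L x / π := funext hf₁
  have hf₀_eq : f₀ = fun x => (1 - L x) / (1 - π) := funext hf₀
  have hf₁m : Measurable f₁ := by rw [hf₁_eq]; exact hL_meas.div_const π
  have hf₀m : Measurable f₀ := by
    rw [hf₀_eq]; exact ((measurable_const.sub hL_meas).div_const (1 - π))
  have hgm : Measurable (fun x => f₁ x * Real.log (f₁ x / (f₁ x + f₀ x)) +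
      f₀ x * Real.log (f₀ x / (f₁ x + f₀ x))) := by
    apply Measurable.add
    · exact hf₁m.mul ((hf₁m.div (hf₁m.add hf₀m)).log)
    · exact hf₀m.mul ((hf₀m.div (hf₁m.add hf₀m)).log)
  -- bound on the inner factor
  have hbound : ∀ x, ‖f₁ x * Real.log (f₁ x / (f₁ x + f₀ x)) +
      f₀ x * Real.log (f₀ x / (f₁ x + f₀ x))‖ ≤ 1 / π + 1 / (1 - π) := by
    intro x
    have hnp := nb_aux_nonpos _ _ (hf₁nn x) (hf₀nn x) (hsum x)
    rw [Real.norm_eq_abs, abs_of_nonpos hnp]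
    have h1 := nb_aux_term_bound (f₁ x) (f₀ x) (hf₁nn x) (hf₀nn x) (hsum x)
    have h2 := nb_aux_term_bound (f₀ x) (f₁ x) (hf₀nn x) (hf₁nn x) (by linarith [hsum x])
    have hcomm : f₀ x + f₁ x = f₁ x + f₀ x := by ring
    rw [hcomm] at h2
    have hf₁b : f₁ x ≤ 1 / π := by
      rw [hf₁ x]; exact (div_le_div_iff_of_pos_right hπ0).2 (hL01 x).2
    have hf₀b : f₀ x ≤ 1 / (1 - π) := by
      rw [hf₀ x]; exact (div_le_div_iff_of_pos_right hπ1').2 (by linarith [(hL01 x).1])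
    linarith
  have hG_int : Integrable G := by
    rw [hG]
    exact hp_intble.bdd_mul hgm.aestronglyMeasurable (ae_of_all _ hbound)
  -- the integral is zero, hence the (nonpositive) integrand vanishes a.e.
  have hI0 : ∫ x, G x = 0 := by
    have : (1 / 2 : ℝ) * (∫ x, G x) + Real.log 2 = Real.log 2 := hmax
    linarith
  have hae' : ∀ᵐ x, G x = 0 := by
    have h := (integral_eq_zero_iff_of_nonneg (f := fun x => -G x)
      (fun x => by simpa using hGnonpos x) hG_int.neg).1
      (by rw [integral_neg, hI0, neg_zero])
    filter_upwards [h] with x hx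
    have hx' : -G x = 0 := hx
    linarith
  rw [ae_iff] at hae'
  -- on the support, L takes only the values 0 and 1
  have key : ∀ x ∈ S₁ ∪ S₂, L x = 0 ∨ L x = 1 := by
    by_contra hcon
    push_neg at hcon
    obtain ⟨x₀, hx₀S, hx₀0, hx₀1⟩ := hcon
    set B : Set (Fin n → ℝ) := (S₁ ∪ S₂) ∩ L ⁻¹' Set.Ioo 0 1 with hB
    have hBopen : IsOpen B := (hS₁open.union hS₂open).inter (isOpen_Ioo.preimage hL_cont)
    have hBne : B.Nonempty := by
      refine ⟨x₀, hx₀S, ?_⟩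
      exact ⟨lt_of_le_of_ne (hL01 x₀).1 (Ne.symm hx₀0), lt_of_le_of_ne (hL01 x₀).2 hx₀1⟩
    have hBsub : B ⊆ {x | ¬ G x = 0} := by
      rintro x ⟨hxS, hxL⟩
      obtain ⟨hL0, hL1⟩ := hxL
      have hpx : 0 < p x := by
        have : x ∈ {x | 0 < p x} := by rw [hsupp]; exact hxS
        exact this
      have ha : 0 < f₁ x := by rw [hf₁ x]; exact div_pos hL0 hπ0
      have hb : 0 < f₀ x := by rw [hf₀ x]; exact div_pos (by linarith) hπ1'
      have hneg : G x < 0 := mul_neg_of_neg_of_pos (nb_aux_neg _ _ ha hb) hpx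
      exact ne_of_lt hneg
    have hB0 : volume B = 0 := measure_mono_null hBsub hae'
    exact absurd hB0 (ne_of_gt (hBopen.measure_pos volume hBne))
  -- L is constant on each component
  have h1c := nb_const_of_two_values S₁ hS₁conn.isConnected.isPreconnected L hL_cont
    (fun x hx => key x (Or.inl hx))
  have h2c := nb_const_of_two_values S₂ hS₂conn.isConnected.isPreconnected L hL_cont
    (fun x hx => key x (Or.inr hx))
  -- rule out the cases (0,0) and (1,1) via the value of π
  have hzero_case : ¬ ((∀ x ∈ S₁, L x = 0) ∧ (∀ x ∈ S₂, L x = 0)) := by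
    rintro ⟨h1, h2⟩
    have : ∀ x, L x * p x = 0 := by
      intro x
      by_cases hx : 0 < p x
      · have hxS : x ∈ S₁ ∪ S₂ := by rw [← hsupp]; exact hx
        rcases hxS with h | h
        · rw [h1 x h]; ring
        · rw [h2 x h]; ring
      · have : p x = 0 := le_antisymm (not_lt.1 hx) (hp_nonneg x)
        rw [this]; ring
    have : π = 0 := by rw [hπ_def]; simp [this]
    linarith
  have hone_case : ¬ ((∀ x ∈ S₁, L x = 1) ∧ (∀ x ∈ S₂, L x = 1)) := by
    rintro ⟨h1, h2⟩
    have heq : ∀ x, L x * p x = p x := by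
      intro x
      by_cases hx : 0 < p x
      · have hxS : x ∈ S₁ ∪ S₂ := by rw [← hsupp]; exact hx
        rcases hxS with h | h
        · rw [h1 x h]; ring
        · rw [h2 x h]; ring
      · have : p x = 0 := le_antisymm (not_lt.1 hx) (hp_nonneg x)
        rw [this]; ring
    have : π = 1 := by
      rw [hπ_def]
      calc (∫ x, L x * p x) = ∫ x, p x := by congr 1; funext x; exact heq x
        _ = 1 := hp_int
    linarith
  obtain ⟨x₁, hx₁⟩ := hS₁ne
  rcases h1c with h1 | h1 <;> rcases h2c with h2 | h2
  · exact absurd ⟨h1, h2⟩ hzero_case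
  · -- L ≡ 0 on S₁, L ≡ 1 on S₂
    left
    refine ⟨⟨h1, h2⟩, ?_⟩
    rintro ⟨h1', _⟩
    have := h1 x₁ hx₁
    have := h1' x₁ hx₁
    linarith
  · -- L ≡ 1 on S₁, L ≡ 0 on S₂
    right
    refine ⟨⟨h1, h2⟩, ?_⟩
    rintro ⟨h1', _⟩
    have := h1 x₁ hx₁
    have := h1' x₁ hx₁
    linarith
  · exact absurd ⟨h1, h2⟩ hone_case
end

section
/- Let p be a probability density on ℝⁿ, K ≥ 1, and L : ℝⁿ → ℝ^K measurable with L_k(x) ≥ 0 and ∑_{k=1}^K L_k(x) = 1 for every x; assume π_k := ∫ L_k(x) p(x) dx ∈ (0,1) for every k. Define q_k(x) := L_k(x) p(x)/π_k, q̄_k(x) := (1−L_k(x)) p(x)/(1−π_k), f_k(x) := L_k(x)/π_k, and f̄_k(x) := (1−L_k(x))/(1−π_k). Then: (i) q̄_k(x) = (p(x) − π_k q_k(x))/(1 − π_k) for every x and ∫ q̄_k(x) dx = 1; and (ii) the average Jensen–Shannon divergence satisfies (1/K) ∑_{k=1}^K JS(q_k ‖ q̄_k) = (1/(2K)) ∫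 ∑_{k=1}^K [ f_k(x) · log( f_k(x)/(f_k(x)+f̄_k(x)) ) + f̄_k(x) · log( f̄_k(x)/(f_k(x)+f̄_k(x)) ) ] p(x) dx + log 2, where JS(a ‖ b) := ½ ∫ a log(a/m) + ½ ∫ b log(b/m) with m := (a+b)/2, all integrals are Lebesgue integrals (well defined in the extended reals), and the convention 0 · log 0 = 0 is used. -/
open MeasureTheory

/-- Jensen–Shannon divergence between two densities on `ℝⁿ`:
`JS(a ‖ b) = ½ ∫ a log(a/m) + ½ ∫ b log(b/m)` with `m = (a+b)/2` (Lebesgue integrals,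
natural logs, convention `0 · log 0 = 0`). -/
noncomputable def JSdiv {n : ℕ} (a b : (Fin n → ℝ) → ℝ) : ℝ :=
  (1 / 2) * (∫ x, a x * Real.log (a x / ((a x + b x) / 2))) +
    (1 / 2) * (∫ x, b x * Real.log (b x / ((a x + b x) / 2)))

/-- `-b ≤ a log(a/(a+b)) ≤ 0` for `a, b ≥ 0`. -/
lemma aux_log_bounds {a b : ℝ} (ha : 0 ≤ a) (hb : 0 ≤ b) :
    -b ≤ a * Real.log (a / (a + b)) ∧ a * Real.log (a / (a + b)) ≤ 0 := by
  rcases eq_or_lt_of_le ha with h | h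
  · constructor
    · simp [← h]; linarith
    · simp [← h]
  · have hab : 0 < a + b := by linarith
    constructor
    · have h1 : Real.log ((a + b) / a) ≤ (a + b) / a - 1 :=
        Real.log_le_sub_one_of_pos (by positivity)
      have h2 : Real.log (a / (a + b)) = -Real.log ((a + b) / a) := by
        rw [← Real.log_inv]; congr 1; rw [inv_div]
      have h3 : a * Real.log ((a + b) / a) ≤ a * ((a + b) / a - 1) :=
        mul_le_mul_of_nonneg_left h1 ha
      have h4 : a * ((a + b) / a - 1) = b := by field_simp; ring
      rw [h2]
      nlinarith
    · have h5 : a / (a + b) ≤ 1 := by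
        rw [div_le_one hab]; linarith
      have h6 : Real.log (a / (a + b)) ≤ 0 := Real.log_nonpos (by positivity) h5
      exact mul_nonpos_of_nonneg_of_nonpos ha h6

/-- Key pointwise identity: `(aP) log((aP)/((aP+bP)/2)) = a log(a/(a+b)) P + (aP) log 2`. -/
lemma aux_key {a b P : ℝ} (ha : 0 ≤ a) (hb : 0 ≤ b) (hP : 0 ≤ P) :
    (a * P) * Real.log ((a * P) / ((a * P + b * P) / 2)) =
      a * Real.log (a / (a + b)) * P + (a * P) * Real.log 2 := by
  rcases eq_or_lt_of_le hP with hP0 | hP0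
  · simp [← hP0]
  rcases eq_or_lt_of_le ha with ha0 | ha0
  · simp [← ha0]
  have hab : 0 < a + b := by linarith
  have harg : (a * P) / ((a * P + b * P) / 2) = 2 * (a / (a + b)) := by
    field_simp
  rw [harg, Real.log_mul (by norm_num) (by positivity)]
  ring

/-- **Multi-partition extension of Neural Bayes-DML (appendix Theorem 3).**
With `q_k = L_k p / π_k`, `q̄_k = (1−L_k) p / (1−π_k)`, `f_k = L_k/π_k`,
`f̄_k = (1−L_k)/(1−π_k)`: (i) `q̄_k = (p − π_k q_k)/(1−π_k)` and `∫ q̄_k = 1`; and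
(ii) the average Jensen–Shannon divergence `(1/K) ∑ₖ JS(q_k ‖ q̄_k)` equals
`(1/(2K)) ∫ ∑ₖ [f_k log(f_k/(f_k+f̄_k)) + f̄_k log(f̄_k/(f_k+f̄_k))] p + log 2`. -/
theorem neural_bayes_DML_multi_partition {n K : ℕ} (hK : 1 ≤ K)
    (p : (Fin n → ℝ) → ℝ) (hp_meas : Measurable p)
    (hp_nonneg : ∀ x, 0 ≤ p x) (hp_int : ∫ x, p x = 1)
    (L : (Fin n → ℝ) → Fin K → ℝ) (hL_meas : Measurable L)
    (hL_nonneg : ∀ x k, 0 ≤ L x k) (hL_sum : ∀ x, ∑ k, L x k = 1)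
    (π : Fin K → ℝ) (hπ_def : ∀ k, π k = ∫ x, L x k * p x)
    (hπ_mem : ∀ k, π k ∈ Set.Ioo (0 : ℝ) 1)
    (q qbar f fbar : Fin K → (Fin n → ℝ) → ℝ)
    (hq : ∀ k x, q k x = L x k * p x / π k)
    (hqbar : ∀ k x, qbar k x = (1 - L x k) * p x / (1 - π k))
    (hf : ∀ k x, f k x = L x k / π k)
    (hfbar : ∀ k x, fbar k x = (1 - L x k) / (1 - π k)) :
    (∀ k x, qbar k x = (p x - π k * q k x) / (1 - π k)) ∧
    (∀ k, ∫ x, qbar k x = 1) ∧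
    (1 / (K : ℝ)) * ∑ k, JSdiv (q k) (qbar k) =
      (1 / (2 * (K : ℝ))) * (∫ x, (∑ k,
          (f k x * Real.log (f k x / (f k x + fbar k x)) +
            fbar k x * Real.log (fbar k x / (f k x + fbar k x)))) * p x) + Real.log 2 := by
  have hπpos : ∀ k, 0 < π k := fun k => (hπ_mem k).1
  have hπlt : ∀ k, π k < 1 := fun k => (hπ_mem k).2
  have h1π : ∀ k, 0 < 1 - π k := fun k => by linarith [hπlt k]
  -- p is integrable
  have hp_int' : Integrable p := by
    by_contra h
    rw [integral_undef h] at hp_int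
    norm_num at hp_int
  have hL_le : ∀ x k, L x k ≤ 1 := by
    intro x k
    calc L x k ≤ ∑ j, L x j :=
          Finset.single_le_sum (fun j _ => hL_nonneg x j) (Finset.mem_univ k)
      _ = 1 := hL_sum x
  have hLk_meas : ∀ k, Measurable fun x => L x k :=
    fun k => (measurable_pi_apply k).comp hL_meas
  have hLp_int : ∀ k, Integrable fun x => L x k * p x := by
    intro k
    refine hp_int'.mono' ((hLk_meas k).mul hp_meas).aestronglyMeasurable ?_
    filter_upwards with x
    have h0 : (0 : ℝ) ≤ L x k * p x := mul_nonneg (hL_nonneg x k) (hp_nonneg x)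
    rw [Real.norm_eq_abs, abs_of_nonneg h0]
    nlinarith [hL_le x k, hp_nonneg x]
  -- part (i).1
  have part1 : ∀ k x, qbar k x = (p x - π k * q k x) / (1 - π k) := by
    intro k x
    rw [hqbar, hq]
    have hπ0 : π k ≠ 0 := ne_of_gt (hπpos k)
    field_simp
  -- integrability and integrals of q and qbar
  have hq_fun : ∀ k, q k = fun x => L x k * p x / π k := fun k => funext (hq k)
  have hqbar_fun : ∀ k, qbar k = fun x => (p x - L x k * p x) / (1 - π k) := by
    intro k; funext x; rw [hqbar]; ring
  have hq_int : ∀ k, Integrable (q k) := by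
    intro k; rw [hq_fun k]; exact (hLp_int k).div_const _
  have hq_integral : ∀ k, ∫ x, q k x = 1 := by
    intro k
    simp only [hq k]
    rw [integral_div, ← hπ_def k, div_self (ne_of_gt (hπpos k))]
  have hqbar_int : ∀ k, Integrable (qbar k) := by
    intro k; rw [hqbar_fun k]; exact (hp_int'.sub (hLp_int k)).div_const _
  have part2 : ∀ k, ∫ x, qbar k x = 1 := by
    intro k
    have : ∀ x, qbar k x = (p x - L x k * p x) / (1 - π k) := fun x => by rw [hqbar]; ring
    simp only [this]
    rw [integral_div, integral_sub hp_int' (hLp_int k), hp_int, ← hπ_def k,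
      div_self (ne_of_gt (h1π k))]
  -- nonnegativity and measurability of f, fbar
  have hf_nonneg : ∀ k x, 0 ≤ f k x := by
    intro k x; rw [hf]; exact div_nonneg (hL_nonneg x k) (hπpos k).le
  have hfbar_nonneg : ∀ k x, 0 ≤ fbar k x := by
    intro k x; rw [hfbar]
    exact div_nonneg (by linarith [hL_le x k]) (h1π k).le
  have hf_meas : ∀ k, Measurable (f k) := by
    intro k
    rw [show f k = fun x => L x k / π k from funext (hf k)]
    exact (hLk_meas k).div_const _
  have hfbar_meas : ∀ k, Measurable (fbar k) := by
    intro k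
    rw [show fbar k = fun x => (1 - L x k) / (1 - π k) from funext (hfbar k)]
    exact (measurable_const.sub (hLk_meas k)).div_const _
  -- relations q = f p, qbar = fbar p
  have hq_eq : ∀ k x, q k x = f k x * p x := by
    intro k x; rw [hq, hf]; ring
  have hqbar_eq2 : ∀ k x, qbar k x = fbar k x * p x := by
    intro k x; rw [hqbar, hfbar]; ring
  -- integrability of the two log-terms
  have hA_meas : ∀ k, Measurable fun x =>
      f k x * Real.log (f k x / (f k x + fbar k x)) * p x := by
    intro k
    exact ((hf_meas k).mul ((hf_meas k).div ((hf_meas k).add (hfbar_meas k))).log).mul hp_meas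
  have hB_meas : ∀ k, Measurable fun x =>
      fbar k x * Real.log (fbar k x / (f k x + fbar k x)) * p x := by
    intro k
    exact ((hfbar_meas k).mul
      ((hfbar_meas k).div ((hf_meas k).add (hfbar_meas k))).log).mul hp_meas
  have hA_int : ∀ k, Integrable fun x =>
      f k x * Real.log (f k x / (f k x + fbar k x)) * p x := by
    intro k
    refine (hqbar_int k).mono' (hA_meas k).aestronglyMeasurable ?_
    filter_upwards with x
    obtain ⟨hlo, hhi⟩ := aux_log_bounds (hf_nonneg k x) (hfbar_nonneg k x)
    rw [Real.norm_eq_abs, abs_le, hqbar_eq2 k x]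
    constructor
    · nlinarith [hp_nonneg x]
    · nlinarith [hp_nonneg x, hfbar_nonneg k x]
  have hB_int : ∀ k, Integrable fun x =>
      fbar k x * Real.log (fbar k x / (f k x + fbar k x)) * p x := by
    intro k
    refine (hq_int k).mono' (hB_meas k).aestronglyMeasurable ?_
    filter_upwards with x
    obtain ⟨hlo, hhi⟩ := aux_log_bounds (hfbar_nonneg k x) (hf_nonneg k x)
    rw [add_comm (fbar k x) (f k x)] at hlo hhi
    rw [Real.norm_eq_abs, abs_le, hq_eq k x]
    constructor
    · nlinarith [hp_nonneg x]
    · nlinarith [hp_nonneg x, hf_nonneg k x]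
  -- the two half-integrals of the JS divergence
  have key1 : ∀ k, (∫ x, q k x * Real.log (q k x / ((q k x + qbar k x) / 2))) =
      (∫ x, f k x * Real.log (f k x / (f k x + fbar k x)) * p x) + Real.log 2 := by
    intro k
    have hpt : ∀ x, q k x * Real.log (q k x / ((q k x + qbar k x) / 2)) =
        f k x * Real.log (f k x / (f k x + fbar k x)) * p x + q k x * Real.log 2 := by
      intro x
      rw [hq_eq k x, hqbar_eq2 k x]
      exact aux_key (hf_nonneg k x) (hfbar_nonneg k x) (hp_nonneg x)
    simp only [hpt]
    rw [integral_add (hA_int k) ((hq_int k).mul_const _), integral_mul_const,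
      hq_integral k, one_mul]
  have key2 : ∀ k, (∫ x, qbar k x * Real.log (qbar k x / ((q k x + qbar k x) / 2))) =
      (∫ x, fbar k x * Real.log (fbar k x / (f k x + fbar k x)) * p x) + Real.log 2 := by
    intro k
    have hpt : ∀ x, qbar k x * Real.log (qbar k x / ((q k x + qbar k x) / 2)) =
        fbar k x * Real.log (fbar k x / (f k x + fbar k x)) * p x + qbar k x * Real.log 2 := by
      intro x
      rw [hq_eq k x, hqbar_eq2 k x, add_comm (f k x * p x) (fbar k x * p x),
        add_comm (f k x) (fbar k x)]
      exact aux_key (hfbar_nonneg k x) (hf_nonneg k x) (hp_nonneg x)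
    simp only [hpt]
    rw [integral_add (hB_int k) ((hqbar_int k).mul_const _), integral_mul_const,
      part2 k, one_mul]
  have hJS : ∀ k, JSdiv (q k) (qbar k) =
      (1 / 2) * ((∫ x, f k x * Real.log (f k x / (f k x + fbar k x)) * p x) +
        (∫ x, fbar k x * Real.log (fbar k x / (f k x + fbar k x)) * p x)) + Real.log 2 := by
    intro k
    rw [JSdiv, key1 k, key2 k]; ring
  refine ⟨part1, part2, ?_⟩
  -- rewrite the big integral as a sum of integrals
  have hsum_int : (∫ x, (∑ k,
        (f k x * Real.log (f k x / (f k x + fbar k x)) +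
          fbar k x * Real.log (fbar k x / (f k x + fbar k x)))) * p x) =
      ∑ k, ((∫ x, f k x * Real.log (f k x / (f k x + fbar k x)) * p x) +
        (∫ x, fbar k x * Real.log (fbar k x / (f k x + fbar k x)) * p x)) := by
    have hpt : ∀ x, (∑ k,
        (f k x * Real.log (f k x / (f k x + fbar k x)) +
          fbar k x * Real.log (fbar k x / (f k x + fbar k x)))) * p x =
        ∑ k, (f k x * Real.log (f k x / (f k x + fbar k x)) * p x +
          fbar k x * Real.log (fbar k x / (f k x + fbar k x)) * p x) := by
      intro x
      rw [Finset.sum_mul]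
      exact Finset.sum_congr rfl fun k _ => by ring
    simp only [hpt]
    have hC_int : ∀ k, Integrable fun x =>
        f k x * Real.log (f k x / (f k x + fbar k x)) * p x +
          fbar k x * Real.log (fbar k x / (f k x + fbar k x)) * p x :=
      fun k => (hA_int k).add (hB_int k)
    rw [integral_finset_sum Finset.univ (fun k _ => hC_int k)]
    exact Finset.sum_congr rfl fun k _ => integral_add (hA_int k) (hB_int k)
  rw [hsum_int]
  simp only [hJS]
  rw [Finset.sum_add_distrib, Finset.sum_const, Finset.card_univ, Fintype.card_fin,
    ← Finset.mul_sum, nsmul_eq_mul]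
  have hKne : (K : ℝ) ≠ 0 := by
    have : 0 < K := lt_of_lt_of_le one_pos hK
    exact_mod_cast this.ne'
  field_simp
end

section
/- Let p be a probability density on ℝⁿ. Then the supremum, over all triples (q₀, q₁, π) where q₀ and q₁ are probability densities on ℝⁿ, π ∈ (0,1), and π·q₁(x) + (1−π)·q₀(x) = p(x) for Lebesgue-almost every x, of the Jensen–Shannon divergence JS(q₀ ‖ q₁), equals the supremum, over all measurable L : ℝⁿ → ℝ with 0 ≤ L(x) ≤ 1 for all x and ∫ L p ∈ (0,1), of ½ ∫ [ f₁(x) · log( f₁(x)/(f₁(x)+f₀(x)) ) + f₀(x) · log( f₀(x)/(f₁(x)+f₀(x)) ) ] p(x) dx + log 2, where f₁(x) := L(x)/∫Lp and f₀(x) := (1−L(x))/(1−∫Lp). -/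
open MeasureTheory

lemma abs_mul_log_div_le {a s : ℝ} (ha : 0 ≤ a) (has : a ≤ s) :
    |a * Real.log (a / s)| ≤ s := by
  rcases eq_or_lt_of_le ha with h | h
  · simp [← h]; linarith
  · have hs : 0 < s := lt_of_lt_of_le h has
    have hlog : Real.log (a / s) ≤ 0 :=
      Real.log_nonpos (by positivity) (by rw [div_le_one hs]; exact has)
    have h1 : a * Real.log (a / s) ≤ 0 := mul_nonpos_of_nonneg_of_nonpos ha hlog
    rw [abs_of_nonpos h1]
    have h2 : -(a * Real.log (a / s)) = a * Real.log (s / a) := by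
      rw [show Real.log (s/a) = -Real.log (a/s) by rw [← Real.log_inv, inv_div]]; ring
    rw [h2]
    calc a * Real.log (s / a) ≤ a * (s / a - 1) :=
          mul_le_mul_of_nonneg_left (Real.log_le_sub_one_of_pos (by positivity)) ha
      _ = s - a := by field_simp
      _ ≤ s := by linarith

lemma point_id {a s P : ℝ} (ha : 0 ≤ a) (hs : 0 < s) (hP : 0 ≤ P) :
    (a * P) * Real.log ((a * P) / (s * P / 2)) =
      a * Real.log (a / s) * P + a * P * Real.log 2 := by
  rcases eq_or_lt_of_le hP with hP0 | hP0
  · simp [← hP0]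
  rcases eq_or_lt_of_le ha with ha0 | ha0
  · simp [← ha0]
  have hq : (a * P) / (s * P / 2) = 2 * (a / s) := by
    field_simp
  rw [hq, Real.log_mul two_ne_zero (ne_of_gt (div_pos ha0 hs))]
  ring

lemma key_integral {n : ℕ} (p L : (Fin n → ℝ) → ℝ) (hp_meas : Measurable p)
    (hp_nonneg : ∀ x, 0 ≤ p x) (hp_int : ∫ x, p x = 1)
    (hL_meas : Measurable L) (hL : ∀ x, L x ∈ Set.Icc (0:ℝ) 1)
    (π : ℝ) (hπdef : π = ∫ x, L x * p x) (hπ : π ∈ Set.Ioo (0:ℝ) 1) :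
    JSdiv (fun x => (1 - L x) / (1 - π) * p x) (fun x => L x / π * p x) =
      (1 / 2) * (∫ x, ((L x / π) * Real.log ((L x / π) / ((L x / π) + ((1 - L x) / (1 - π)))) +
          ((1 - L x) / (1 - π)) * Real.log (((1 - L x) / (1 - π)) / ((L x / π) + ((1 - L x) / (1 - π))))) * p x)
        + Real.log 2 := by
  obtain ⟨hπ0, hπ1⟩ := hπ
  have h1π : 0 < 1 - π := by linarith
  set f₁ : (Fin n → ℝ) → ℝ := fun x => L x / π with hf₁def
  set f₀ : (Fin n → ℝ) → ℝ := fun x => (1 - L x) / (1 - π) with hf₀def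
  set s : (Fin n → ℝ) → ℝ := fun x => f₁ x + f₀ x with hsdef
  have hf₁nn : ∀ x, 0 ≤ f₁ x := fun x => div_nonneg (hL x).1 hπ0.le
  have hf₀nn : ∀ x, 0 ≤ f₀ x := fun x => div_nonneg (by linarith [(hL x).2]) h1π.le
  have hs_pos : ∀ x, 0 < s x := by
    intro x
    rcases (hL x).1.lt_or_eq with h | h
    · exact add_pos_of_pos_of_nonneg (div_pos h hπ0) (hf₀nn x)
    · have : f₀ x = (1 - L x) / (1 - π) := rfl
      have hpos : 0 < f₀ x := div_pos (by rw [← h]; norm_num) h1π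
      exact add_pos_of_nonneg_of_pos (hf₁nn x) hpos
  have hp_integrable : Integrable p (volume : Measure (Fin n → ℝ)) := by
    by_contra h
    rw [integral_undef h] at hp_int
    norm_num at hp_int
  have hLp_int : Integrable (fun x => L x * p x) (volume : Measure (Fin n → ℝ)) := by
    refine hp_integrable.mono' ((hL_meas.mul hp_meas).aestronglyMeasurable) ?_
    filter_upwards with x
    rw [Real.norm_eq_abs, abs_of_nonneg (mul_nonneg (hL x).1 (hp_nonneg x))]
    exact mul_le_of_le_one_left (hp_nonneg x) (hL x).2
  have hf₁p_int : Integrable (fun x => f₁ x * p x) (volume : Measure (Fin n → ℝ)) := by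
    have := hLp_int.div_const π
    refine this.congr ?_
    filter_upwards with x
    simp only [hf₁def]; ring
  have hf₀p_int : Integrable (fun x => f₀ x * p x) (volume : Measure (Fin n → ℝ)) := by
    have := (hp_integrable.sub hLp_int).div_const (1 - π)
    refine this.congr ?_
    filter_upwards with x
    simp only [hf₀def, Pi.sub_apply]; ring
  have hf₁p_one : (∫ x, f₁ x * p x) = 1 := by
    have : (fun x => f₁ x * p x) = fun x => (L x * p x) / π := by
      funext x; simp only [hf₁def]; ring
    rw [this, integral_div, ← hπdef, div_self (ne_of_gt hπ0)]
  have hf₀p_one : (∫ x, f₀ x * p x) = 1 := by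
    have : (fun x => f₀ x * p x) = fun x => (p x - L x * p x) / (1 - π) := by
      funext x; simp only [hf₀def]; ring
    rw [this, integral_div, integral_sub hp_integrable hLp_int, hp_int, ← hπdef,
      div_self (ne_of_gt h1π)]
  have hf₁meas : Measurable f₁ := hL_meas.div_const π
  have hf₀meas : Measurable f₀ := (measurable_const.sub hL_meas).div_const (1 - π)
  have hsmeas : Measurable s := hf₁meas.add hf₀meas
  have hsp_int : Integrable (fun x => s x * p x) (volume : Measure (Fin n → ℝ)) := by
    refine (hf₁p_int.add hf₀p_int).congr ?_
    filter_upwards with x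
    simp only [hsdef, hf₁def, hf₀def, Pi.add_apply]; ring
  -- integrability of g₁ and g₀
  have glem : ∀ (f : (Fin n → ℝ) → ℝ), Measurable f → (∀ x, 0 ≤ f x) → (∀ x, f x ≤ s x) →
      Integrable (fun x => f x * Real.log (f x / s x) * p x) (volume : Measure (Fin n → ℝ)) := by
    intro f hfm hfnn hfle
    refine hsp_int.mono' ?_ ?_
    · exact ((hfm.mul ((Real.measurable_log.comp (hfm.div hsmeas)))).mul hp_meas).aestronglyMeasurable
    · filter_upwards with x
      rw [Real.norm_eq_abs, abs_mul, abs_of_nonneg (hp_nonneg x)]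
      exact mul_le_mul_of_nonneg_right (abs_mul_log_div_le (hfnn x) (hfle x)) (hp_nonneg x)
  have hg₁_int := glem f₁ hf₁meas hf₁nn (fun x => le_add_of_nonneg_right (hf₀nn x))
  have hg₀_int := glem f₀ hf₀meas hf₀nn (fun x => le_add_of_nonneg_left (hf₁nn x))
  -- first JS integral
  have hI₀ : (∫ x, (f₀ x * p x) * Real.log ((f₀ x * p x) /
      ((f₀ x * p x + f₁ x * p x) / 2))) =
      (∫ x, f₀ x * Real.log (f₀ x / s x) * p x) + Real.log 2 := by
    have hcongr : (fun x => (f₀ x * p x) * Real.log ((f₀ x * p x) /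
        ((f₀ x * p x + f₁ x * p x) / 2))) =
        fun x => f₀ x * Real.log (f₀ x / s x) * p x + (f₀ x * p x) * Real.log 2 := by
      funext x
      have h1 : f₀ x * p x + f₁ x * p x = s x * p x := by simp only [hsdef]; ring
      rw [h1]
      exact point_id (hf₀nn x) (hs_pos x) (hp_nonneg x)
    rw [hcongr, integral_add hg₀_int (hf₀p_int.mul_const _), integral_mul_const, hf₀p_one,
      one_mul]
  have hI₁ : (∫ x, (f₁ x * p x) * Real.log ((f₁ x * p x) /
      ((f₀ x * p x + f₁ x * p x) / 2))) =
      (∫ x, f₁ x * Real.log (f₁ x / s x) * p x) + Real.log 2 := by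
    have hcongr : (fun x => (f₁ x * p x) * Real.log ((f₁ x * p x) /
        ((f₀ x * p x + f₁ x * p x) / 2))) =
        fun x => f₁ x * Real.log (f₁ x / s x) * p x + (f₁ x * p x) * Real.log 2 := by
      funext x
      have h1 : f₀ x * p x + f₁ x * p x = s x * p x := by simp only [hsdef]; ring
      rw [h1]
      exact point_id (hf₁nn x) (hs_pos x) (hp_nonneg x)
    rw [hcongr, integral_add hg₁_int (hf₁p_int.mul_const _), integral_mul_const, hf₁p_one,
      one_mul]
  have hRHS : (∫ x, (f₁ x * Real.log (f₁ x / s x) + f₀ x * Real.log (f₀ x / s x)) * p x) =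
      (∫ x, f₁ x * Real.log (f₁ x / s x) * p x) + (∫ x, f₀ x * Real.log (f₀ x / s x) * p x) := by
    rw [← integral_add hg₁_int hg₀_int]
    congr 1; funext x; ring
  simp only [JSdiv]
  rw [hI₀, hI₁, hRHS]
  ring

/-- **Proposition 2 (Neural Bayes-DML).** The supremum of the Jensen–Shannon divergence
`JS(q₀ ‖ q₁)` over all binary mixture decompositions `π q₁ + (1−π) q₀ = p` (a.e.) of the
density `p`, with `q₀, q₁` densities and `π ∈ (0,1)`, equals the supremum over measurable
labelling functions `L : ℝⁿ → [0,1]` with `∫ L p ∈ (0,1)` of the Neural Bayes-DML objective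
`½ ∫ [f₁ log(f₁/(f₁+f₀)) + f₀ log(f₀/(f₁+f₀))] p + log 2`, where `f₁ = L/∫Lp` and
`f₀ = (1−L)/(1−∫Lp)`. -/
theorem neural_bayes_DML_sup_eq {n : ℕ}
    (p : (Fin n → ℝ) → ℝ) (hp_meas : Measurable p)
    (hp_nonneg : ∀ x, 0 ≤ p x) (hp_int : ∫ x, p x = 1) :
    sSup {r : ℝ | ∃ q₀ q₁ : (Fin n → ℝ) → ℝ, ∃ π : ℝ,
        Measurable q₀ ∧ (∀ x, 0 ≤ q₀ x) ∧ (∫ x, q₀ x) = 1 ∧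
        Measurable q₁ ∧ (∀ x, 0 ≤ q₁ x) ∧ (∫ x, q₁ x) = 1 ∧
        π ∈ Set.Ioo (0 : ℝ) 1 ∧
        (∀ᵐ x ∂(volume : Measure (Fin n → ℝ)), π * q₁ x + (1 - π) * q₀ x = p x) ∧
        r = JSdiv q₀ q₁} =
    sSup {r : ℝ | ∃ L : (Fin n → ℝ) → ℝ, ∃ π : ℝ, ∃ f₁ f₀ : (Fin n → ℝ) → ℝ,
        Measurable L ∧ (∀ x, L x ∈ Set.Icc (0 : ℝ) 1) ∧
        π = (∫ x, L x * p x) ∧ π ∈ Set.Ioo (0 : ℝ) 1 ∧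
        (∀ x, f₁ x = L x / π) ∧ (∀ x, f₀ x = (1 - L x) / (1 - π)) ∧
        r = (1 / 2) * (∫ x, (f₁ x * Real.log (f₁ x / (f₁ x + f₀ x)) +
              f₀ x * Real.log (f₀ x / (f₁ x + f₀ x))) * p x) + Real.log 2} := by
  have hp_integrable : Integrable p (volume : Measure (Fin n → ℝ)) := by
    by_contra h
    rw [integral_undef h] at hp_int
    norm_num at hp_int
  congr 1
  ext r
  simp only [Set.mem_setOf_eq]
  constructor
  · -- left to right
    rintro ⟨q₀, q₁, π, hq₀m, hq₀nn, hq₀1, hq₁m, hq₁nn, hq₁1, ⟨hπ0, hπ1⟩, hmix, hr⟩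
    have h1π : 0 < 1 - π := by linarith
    set L : (Fin n → ℝ) → ℝ := fun x => min 1 (if p x = 0 then π else π * q₁ x / p x) with hLdef
    have hLm : Measurable L := by
      apply measurable_const.min
      exact Measurable.ite (hp_meas (measurableSet_singleton 0)) measurable_const
        ((measurable_const.mul hq₁m).div hp_meas)
    have hLmem : ∀ x, L x ∈ Set.Icc (0:ℝ) 1 := by
      intro x
      refine ⟨le_min zero_le_one ?_, min_le_left _ _⟩
      split_ifs with h
      · exact hπ0.le
      · exact div_nonneg (mul_nonneg hπ0.le (hq₁nn x)) (hp_nonneg x)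
    have hLp_ae : ∀ᵐ x ∂(volume : Measure (Fin n → ℝ)), L x * p x = π * q₁ x := by
      filter_upwards [hmix] with x hx
      by_cases h : p x = 0
      · have hq1 : q₁ x = 0 := by nlinarith [hq₀nn x, hq₁nn x]
        simp [hLdef, h, hq1]
      · have hp0 : 0 < p x := (hp_nonneg x).lt_of_ne (Ne.symm h)
        have hle : π * q₁ x / p x ≤ 1 := by
          rw [div_le_one hp0]; nlinarith [hq₀nn x]
        simp only [hLdef, if_neg h, min_eq_right hle]
        field_simp
    have hπint : π = ∫ x, L x * p x := by
      rw [integral_congr_ae hLp_ae, integral_const_mul, hq₁1, mul_one]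
    have hq₁ae : ∀ᵐ x ∂(volume : Measure (Fin n → ℝ)), q₁ x = L x / π * p x := by
      filter_upwards [hLp_ae] with x hx
      have h3 : L x / π * p x = (L x * p x) / π := by ring
      rw [h3, hx, mul_div_cancel_left₀ _ (ne_of_gt hπ0)]
    have hq₀ae : ∀ᵐ x ∂(volume : Measure (Fin n → ℝ)),
        q₀ x = (1 - L x) / (1 - π) * p x := by
      filter_upwards [hLp_ae, hmix] with x h1 h2
      have h3 : (1 - L x) / (1 - π) * p x = (p x - L x * p x) / (1 - π) := by ring
      rw [h3, h1, ← h2]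
      have h4 : π * q₁ x + (1 - π) * q₀ x - π * q₁ x = (1 - π) * q₀ x := by ring
      rw [h4, mul_div_cancel_left₀ _ (ne_of_gt h1π)]
    have hJS : JSdiv q₀ q₁ =
        JSdiv (fun x => (1 - L x) / (1 - π) * p x) (fun x => L x / π * p x) := by
      unfold JSdiv
      congr 1
      · congr 1
        apply integral_congr_ae
        filter_upwards [hq₀ae, hq₁ae] with x e0 e1
        rw [e0, e1]
      · congr 1
        apply integral_congr_ae
        filter_upwards [hq₀ae, hq₁ae] with x e0 e1
        rw [e0, e1]
    refine ⟨L, π, fun x => L x / π, fun x => (1 - L x) / (1 - π), hLm, hLmem, hπint,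
      ⟨hπ0, hπ1⟩, fun x => rfl, fun x => rfl, ?_⟩
    rw [hr, hJS]
    exact key_integral p L hp_meas hp_nonneg hp_int hLm hLmem π hπint ⟨hπ0, hπ1⟩
  · -- right to left
    rintro ⟨L, π, f₁, f₀, hLm, hLmem, hπdef, ⟨hπ0, hπ1⟩, hf₁, hf₀, hr⟩
    have h1π : 0 < 1 - π := by linarith
    have hf₁' : f₁ = fun x => L x / π := funext hf₁
    have hf₀' : f₀ = fun x => (1 - L x) / (1 - π) := funext hf₀
    subst hf₁' hf₀'
    have hLp_int : Integrable (fun x => L x * p x) (volume : Measure (Fin n → ℝ)) := by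
      refine hp_integrable.mono' ((hLm.mul hp_meas).aestronglyMeasurable) ?_
      filter_upwards with x
      rw [Real.norm_eq_abs, abs_of_nonneg (mul_nonneg (hLmem x).1 (hp_nonneg x))]
      exact mul_le_of_le_one_left (hp_nonneg x) (hLmem x).2
    refine ⟨fun x => (1 - L x) / (1 - π) * p x, fun x => L x / π * p x, π,
      ((measurable_const.sub hLm).div_const _).mul hp_meas,
      fun x => mul_nonneg (div_nonneg (by linarith [(hLmem x).2]) h1π.le) (hp_nonneg x),
      ?_, (hLm.div_const _).mul hp_meas,
      fun x => mul_nonneg (div_nonneg (hLmem x).1 hπ0.le) (hp_nonneg x),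
      ?_, ⟨hπ0, hπ1⟩, ?_, ?_⟩
    · -- ∫ q₀ = 1
      have h : (fun x => (1 - L x) / (1 - π) * p x) =
          fun x => (p x - L x * p x) / (1 - π) := by
        funext x; ring
      rw [h, integral_div, integral_sub hp_integrable hLp_int, hp_int, ← hπdef,
        div_self (ne_of_gt h1π)]
    · -- ∫ q₁ = 1
      have h : (fun x => L x / π * p x) = fun x => (L x * p x) / π := by
        funext x; ring
      rw [h, integral_div, ← hπdef, div_self (ne_of_gt hπ0)]
    · -- mixture
      filter_upwards with x
      field_simp
      ring
    · rw [hr]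
      exact (key_integral p L hp_meas hp_nonneg hp_int hLm hLmem π hπdef ⟨hπ0, hπ1⟩).symm
end
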